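/- Let K be a field, E a K-vector space of finite dimension N+1, and w a weight function on E. If l_0, …, l_N and l'_0, …, l'_N are two bases of E adapted to w, then the multisets of weights {w(l_0), …, w(l_N)} and {w(l'_0), …, w(l'_N)} coincide; equivalently, the vector of weights of an adapted basis, sorted in decreasing order, is independent of the choice of adapted basis. -/

import Mathlib

/-- A weight function on a `K`-vector space `E` is a map `w : E → ℝ ∪ {−∞}` such that
(1) `w x = −∞` iff `x = 0`; (2) `w (t • x) = w x` for all nonzero `t : K`;
(3) `w (x + y) ≤ max (w x) (w y)`. -/
def IsWeightFunction (K : Type*) [Field K] {E : Type*} [AddCommGroup E] [Module K E]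
    (w : E → WithBot ℝ) : Prop :=
  (∀ x : E, w x = ⊥ ↔ x = 0) ∧
  (∀ (t : K) (x : E), t ≠ 0 → w (t • x) = w x) ∧
  (∀ x y : E, w (x + y) ≤ max (w x) (w y))

/-- A basis `b` of `E` is adapted to the weight function `w` if for every `α ∈ ℝ`, the
sublevel subspace `F^α = {x ∈ E : w x ≤ α}` equals the span of `{b j : w (b j) ≤ α}`. -/
def IsAdaptedBasis (K : Type*) [Field K] {E : Type*} [AddCommGroup E] [Module K E]
    {ι : Type*} (w : E → WithBot ℝ) (b : Module.Basis ι K E) : Prop :=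
  ∀ α : ℝ, {x : E | w x ≤ (α : WithBot ℝ)} =
    ↑(Submodule.span K (b '' {j : ι | w (b j) ≤ (α : WithBot ℝ)}))

open Multiset in
/-- A finite multiset in a linear order is determined by the counting function
`c ↦ countP (· ≤ c)`. -/
theorem multiset_eq_of_countP_le {γ : Type*} [LinearOrder γ] [DecidableEq γ]
    {s t : Multiset γ} (h : ∀ c : γ, s.countP (· ≤ c) = t.countP (· ≤ c)) : s = t := by
  classical
  have key : ∀ u : Multiset γ, ∀ a : γ,
      u.countP (· ≤ a) = u.countP (· < a) + card (u.filter (· = a)) := by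
    intro u a
    rw [countP_eq_card_filter, countP_eq_card_filter, ← card_add, filter_add_filter]
    have h1 : (u.filter fun x => x < a ∨ x = a) = u.filter (· ≤ a) := by
      apply filter_congr; intro x _; constructor
      · rintro (h | rfl); exact le_of_lt h; exact le_rfl
      · intro h; exact lt_or_eq_of_le h
    have h2 : (u.filter fun x => x < a ∧ x = a) = 0 := by
      rw [Multiset.filter_eq_nil]; rintro x _ ⟨h1, rfl⟩; exact lt_irrefl _ h1
    rw [h1, h2, add_zero]
  have hlt : ∀ a : γ, s.countP (· < a) = t.countP (· < a) := by
    intro a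
    by_cases hF : ((s + t).filter (· < a)) = 0
    · rw [Multiset.filter_eq_nil] at hF
      rw [countP_eq_card_filter, countP_eq_card_filter,
        Multiset.filter_eq_nil.2 (fun x hx => hF x (by simp [hx])),
        Multiset.filter_eq_nil.2 (fun x hx => hF x (by simp [hx]))]
    · have hne : ((s + t).filter (· < a)).toFinset.Nonempty := by
        rw [Finset.nonempty_iff_ne_empty]
        intro hcon
        exact hF (by simpa using Multiset.toFinset_eq_empty.mp hcon)
      set m := ((s + t).filter (· < a)).toFinset.max' hne with hm
      have hma : m < a := by
        have := ((s + t).filter (· < a)).toFinset.max'_mem hne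
        rw [Multiset.mem_toFinset, Multiset.mem_filter] at this
        exact this.2
      have hiff : ∀ u : Multiset γ, u ≤ s + t →
          u.countP (· < a) = u.countP (· ≤ m) := by
        intro u hu
        rw [countP_eq_card_filter, countP_eq_card_filter]
        congr 1
        apply filter_congr
        intro x hx
        constructor
        · intro hxa
          apply Finset.le_max'
          rw [Multiset.mem_toFinset, Multiset.mem_filter]
          exact ⟨Multiset.mem_of_le hu hx, hxa⟩
        · intro hxm; exact lt_of_le_of_lt hxm hma
      rw [hiff s (Multiset.le_add_right s t), hiff t (Multiset.le_add_left t s), h m]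
  ext a
  have h1 := key s a
  have h2 := key t a
  rw [h a, hlt a] at h1
  have : card (s.filter (· = a)) = card (t.filter (· = a)) := by omega
  have heq : ∀ u : Multiset γ, u.filter (a = ·) = u.filter (· = a) :=
    fun u => filter_congr (fun x _ => eq_comm)
  rwa [Multiset.count_eq_card_filter_eq, Multiset.count_eq_card_filter_eq, heq s, heq t]

/-- Two bases adapted to the same weight function have the same multiset of weights. -/
theorem adapted_basis_weights_unique (K : Type*) [Field K] (E : Type*) [AddCommGroup E]
    [Module K E] (N : ℕ) (w : E → WithBot ℝ) (hw : IsWeightFunction K w)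
    (b b' : Module.Basis (Fin (N + 1)) K E) (hb : IsAdaptedBasis K w b)
    (hb' : IsAdaptedBasis K w b') :
    (Finset.univ.val.map fun j : Fin (N + 1) => w (b j)) =
      Finset.univ.val.map fun j : Fin (N + 1) => w (b' j) := by
  classical
  -- For each basis, the number of indices with weight ≤ α equals the finrank of the span.
  have count_eq_finrank : ∀ (c : Module.Basis (Fin (N + 1)) K E) (α : ℝ),
      (Finset.univ.val.map fun j => w (c j)).countP (· ≤ (α : WithBot ℝ)) =
        Module.finrank K (Submodule.span K (c '' {j | w (c j) ≤ (α : WithBot ℝ)})) := by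
    intro c α
    set S : Set (Fin (N + 1)) := {j | w (c j) ≤ (α : WithBot ℝ)} with hS
    have himg : c '' S = Set.range (fun j : S => c j) := by
      rw [Set.image_eq_range]
    have hli : LinearIndependent K (fun j : S => c j) :=
      c.linearIndependent.comp Subtype.val Subtype.val_injective
    rw [himg, finrank_span_eq_card hli, Fintype.card_subtype,
      Multiset.countP_map]
    simp only [Finset.card, Finset.filter_val]
    rfl
  -- The spans for b and b' coincide, since both equal the sublevel set.
  have hspan : ∀ α : ℝ,
      Submodule.span K (b '' {j | w (b j) ≤ (α : WithBot ℝ)}) =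
        Submodule.span K (b' '' {j | w (b' j) ≤ (α : WithBot ℝ)}) := by
    intro α
    apply SetLike.coe_injective
    rw [← hb α, ← hb' α]
  have hcount : ∀ α : ℝ,
      (Finset.univ.val.map fun j => w (b j)).countP (· ≤ (α : WithBot ℝ)) =
        (Finset.univ.val.map fun j => w (b' j)).countP (· ≤ (α : WithBot ℝ)) := by
    intro α
    rw [count_eq_finrank b α, count_eq_finrank b' α, hspan α]
  apply multiset_eq_of_countP_le
  intro cc
  induction cc using WithBot.recBotCoe with
  | bot =>
    have hzero : ∀ (c : Module.Basis (Fin (N + 1)) K E),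
        (Finset.univ.val.map fun j => w (c j)).countP (· ≤ (⊥ : WithBot ℝ)) = 0 := by
      intro c
      rw [Multiset.countP_eq_zero]
      intro x hx
      simp only [Multiset.mem_map] at hx
      obtain ⟨j, _, rfl⟩ := hx
      simp only [le_bot_iff]
      intro hcon
      exact c.ne_zero j ((hw.1 (c j)).mp hcon)
    rw [hzero b, hzero b']
  | coe α => exact hcount α
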